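/- Let (Ω, F, (F_s)_{s ∈ [0,T]}, Q) be a filtered probability space, let T > 0 and M ≥ 0, and let α : [0,T] × Ω → ℝ be a jointly measurable process, adapted to (F_s), with |α_s(ω)| ≤ M for all (s, ω). Assume that α_0 = T almost surely, that the process s ↦ α_s + s is a martingale, and that the process s ↦ α_s² + 2∫_0^s α_r dr is a martingale. Then for every s ∈ [0, T], the first and second moments of α_s are E^Q[α_s] = T − s and E^Q[α_s²] = (T − s)². -/

import Mathlib

open MeasureTheory Filter
open scoped Topology

/-- a bounded adapted process `α` on `[0,T]` with `α_0 = T` a.s. such that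
`s ↦ α_s + s` and `s ↦ α_s² + 2∫_0^s α_r dr` are martingales has first moment `T - s`
and second moment `(T - s)²` at every time `s ∈ [0,T]`. -/
theorem moments_of_time_component
    {Ω : Type*} [mΩ : MeasurableSpace Ω]
    (F : ℝ → MeasurableSpace Ω) (hF_le : ∀ s, F s ≤ mΩ)
    (hF_mono : ∀ s t, s ≤ t → F s ≤ F t)
    (Q : Measure Ω) (hQ : IsProbabilityMeasure Q)
    (T M : ℝ) (hT : 0 < T) (hM : 0 ≤ M)
    (α : ℝ → Ω → ℝ)
    (hjoint : Measurable fun p : ℝ × Ω => α p.1 p.2)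
    (hadapt : ∀ s ∈ Set.Icc (0 : ℝ) T, Measurable[F s] (α s))
    (hbound : ∀ s ∈ Set.Icc (0 : ℝ) T, ∀ ω, |α s ω| ≤ M)
    (h0 : ∀ᵐ ω ∂Q, α 0 ω = T)
    (hmart1 : ∀ a b : ℝ, 0 ≤ a → a ≤ b → b ≤ T →
      ∀ L : Set Ω, MeasurableSet[F a] L →
        ∫ ω in L, (α b ω + b) ∂Q = ∫ ω in L, (α a ω + a) ∂Q)
    (hmart2 : ∀ a b : ℝ, 0 ≤ a → a ≤ b → b ≤ T →
      ∀ L : Set Ω, MeasurableSet[F a] L →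
        ∫ ω in L, (α b ω ^ 2 + 2 * ∫ r in (0 : ℝ)..b, α r ω) ∂Q
          = ∫ ω in L, (α a ω ^ 2 + 2 * ∫ r in (0 : ℝ)..a, α r ω) ∂Q) :
    ∀ s ∈ Set.Icc (0 : ℝ) T,
      (∫ ω, α s ω ∂Q = T - s) ∧ (∫ ω, α s ω ^ 2 ∂Q = (T - s) ^ 2) := by
  have meas : ∀ r : ℝ, Measurable (α r) := fun r =>
    hjoint.comp measurable_prodMk_left
  have int_r : ∀ r ∈ Set.Icc (0 : ℝ) T, Integrable (α r) Q := fun r hr =>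
    (integrable_const M).mono' (meas r).aestronglyMeasurable
      (Filter.Eventually.of_forall fun ω => by
        simpa [Real.norm_eq_abs] using hbound r hr ω)
  have hα0 : ∫ ω, α 0 ω ∂Q = T := by
    rw [integral_congr_ae h0]
    simp
  -- first moment
  have mom1 : ∀ r ∈ Set.Icc (0 : ℝ) T, ∫ ω, α r ω ∂Q = T - r := by
    intro r hr
    have key := hmart1 0 r le_rfl hr.1 hr.2 Set.univ MeasurableSet.univ
    simp only [Measure.restrict_univ] at key
    rw [integral_add (int_r r hr) (integrable_const r),
      integral_add (int_r 0 ⟨le_rfl, hT.le⟩) (integrable_const 0)] at key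
    simp only [integral_const, measure_univ, ENNReal.toReal_one, probReal_univ, one_smul,
      smul_eq_mul] at key
    rw [hα0] at key
    linarith
  intro s hs
  refine ⟨mom1 s hs, ?_⟩
  -- second moment
  set ν : Measure ℝ := (volume : Measure ℝ).restrict (Set.Ioc 0 s) with hν
  have hmem : ∀ᵐ p ∂(Q.prod ν), p.2 ∈ Set.Ioc (0 : ℝ) s :=
    Measure.quasiMeasurePreserving_snd.ae (ae_restrict_mem measurableSet_Ioc)
  have hIcc : ∀ r ∈ Set.Ioc (0 : ℝ) s, r ∈ Set.Icc (0 : ℝ) T := fun r hr =>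
    ⟨hr.1.le, hr.2.trans hs.2⟩
  have int_prod : Integrable (fun p : Ω × ℝ => α p.2 p.1) (Q.prod ν) := by
    refine (integrable_const M).mono'
      ((hjoint.comp measurable_swap).aestronglyMeasurable) ?_
    filter_upwards [hmem] with p hp
    simpa [Real.norm_eq_abs] using hbound p.2 (hIcc p.2 hp) p.1
  have swap := integral_integral_swap (f := fun ω r => α r ω) int_prod
  -- value of the inner expectation
  have inner : (∫ r, ∫ ω, α r ω ∂Q ∂ν) = T * s - s ^ 2 / 2 := by
    have h1 : (∫ r, ∫ ω, α r ω ∂Q ∂ν) = ∫ r in Set.Ioc (0 : ℝ) s, (T - r) := by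
      exact setIntegral_congr_fun measurableSet_Ioc fun r hr => mom1 r (hIcc r hr)
    rw [h1, ← intervalIntegral.integral_of_le hs.1]
    have : ∫ r in (0 : ℝ)..s, (T - r) = T * s - s ^ 2 / 2 := by
      rw [intervalIntegral.integral_sub
        (intervalIntegrable_const : IntervalIntegrable (fun _ => T) volume 0 s)
        intervalIntegral.intervalIntegrable_id]
      simp [intervalIntegral.integral_const, integral_id]
      ring
    rw [this]
  -- G ω := interval integral of α over [0, s]
  have hGmeas : Measurable fun ω => ∫ r, α r ω ∂ν :=
    ((hjoint.comp measurable_swap).stronglyMeasurable.integral_prod_right').measurable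
  have hGint : Integrable (fun ω => ∫ r in (0 : ℝ)..s, α r ω) Q := by
    have : (fun ω => ∫ r in (0 : ℝ)..s, α r ω) = fun ω => ∫ r, α r ω ∂ν := by
      funext ω; rw [intervalIntegral.integral_of_le hs.1]
    rw [this]
    refine (integrable_const (M * s)).mono' hGmeas.aestronglyMeasurable
      (Filter.Eventually.of_forall fun ω => ?_)
    have hfin : volume (Set.Ioc (0:ℝ) s) < ⊤ := by
      simp [Real.volume_Ioc]
    have hbd : ‖∫ r in Set.Ioc (0:ℝ) s, α r ω‖ ≤ M * (volume (Set.Ioc (0:ℝ) s)).toReal := by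
      apply norm_setIntegral_le_of_norm_le_const hfin
      · intro r hr
        simpa [Real.norm_eq_abs] using hbound r (hIcc r hr) ω
    have hvol : (volume (Set.Ioc (0:ℝ) s)).toReal = s := by
      simp [Real.volume_Ioc, hs.1]
    rw [hν]
    calc ‖∫ r in Set.Ioc (0:ℝ) s, α r ω‖ ≤ M * (volume (Set.Ioc (0:ℝ) s)).toReal := hbd
      _ = M * s := by rw [hvol]
  have hGval : ∫ ω, (∫ r in (0 : ℝ)..s, α r ω) ∂Q = T * s - s ^ 2 / 2 := by
    have : (fun ω => ∫ r in (0 : ℝ)..s, α r ω) = fun ω => ∫ r, α r ω ∂ν := by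
      funext ω; rw [intervalIntegral.integral_of_le hs.1]
    rw [this]
    calc ∫ ω, (∫ r, α r ω ∂ν) ∂Q = ∫ r, ∫ ω, α r ω ∂Q ∂ν := swap
      _ = T * s - s ^ 2 / 2 := inner
  -- integrability of squares
  have int_sq : ∀ r ∈ Set.Icc (0 : ℝ) T, Integrable (fun ω => α r ω ^ 2) Q := by
    intro r hr
    refine (integrable_const (M ^ 2)).mono' ((meas r).pow_const 2).aestronglyMeasurable
      (Filter.Eventually.of_forall fun ω => ?_)
    have := hbound r hr ω
    have h2 : |α r ω| ^ 2 ≤ M ^ 2 := by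
      apply pow_le_pow_left₀ (abs_nonneg _) this
    simpa [Real.norm_eq_abs, abs_pow, sq_abs] using h2
  have hα0sq : ∫ ω, α 0 ω ^ 2 ∂Q = T ^ 2 := by
    have : ∀ᵐ ω ∂Q, α 0 ω ^ 2 = T ^ 2 := by filter_upwards [h0] with ω hω; rw [hω]
    rw [integral_congr_ae this]; simp
  have key := hmart2 0 s le_rfl hs.1 hs.2 Set.univ MeasurableSet.univ
  simp only [Measure.restrict_univ, intervalIntegral.integral_same, mul_zero, add_zero] at key
  rw [hα0sq] at key
  rw [integral_add (int_sq s hs) (hGint.const_mul 2)] at key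
  rw [integral_const_mul, hGval] at key
  nlinarith [key]
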